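/- If every vertex at distance i from the root of a rooted tree receives color c(i) for some coloring c of the nonnegative integers, then every path in the tree induces a color sequence of the form c(a) c(a-1) … c(m) … c(b-1) c(b) for some m ≤ a, b, i.e., the concatenation of a reversed prefix and a suffix of the level coloring sharing the turning point; consequently, the tree coloring avoids squares of period ≥ k if and only if all words of the form f s f^R (f s a factor of the level word read toward the root, |s| = 1) avoid squares of period ≥ k. -/

import Mathlib

/-- The color sequence of a list `l` contains a square of period at least `k`. -/
def HasSquareGE {α : Type*} (k : ℕ) (l : List α) : Prop :=
  ∃ u : List α, k ≤ u.length ∧ (u ++ u) <:+: l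

/-- The infinite rooted tree on finite sequences of naturals (root `[]`,
children of `x` are the lists `n :: x`), in which the level of a vertex `x`
is `x.length`, its distance to the root. -/
def listTree : SimpleGraph (List ℕ) :=
  SimpleGraph.fromRel (fun x y => ∃ n : ℕ, y = n :: x)

open SimpleGraph List

/-- Generic level-sequence lemma: along a path, the level sequence goes down to a valley
and back up. -/
lemma levels_aux {V : Type*} {G : SimpleGraph V} (ℓ : V → ℕ)
    (hstep : ∀ {x y : V}, G.Adj x y → ℓ y = ℓ x + 1 ∨ ℓ x = ℓ y + 1)
    (hparent : ∀ {x y z : V}, G.Adj x y → G.Adj x z → ℓ y + 1 = ℓ x → ℓ z + 1 = ℓ x → y = z) :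
    ∀ {u v : V} (p : G.Walk u v), p.IsPath →
      ∃ m, m ≤ ℓ u ∧ m ≤ ℓ v ∧
        p.support.map ℓ = (List.range' m (ℓ u - m + 1)).reverse ++ List.range' (m + 1) (ℓ v - m) := by
  intro u v p
  induction p with
  | @nil w =>
    intro _
    exact ⟨ℓ w, le_refl _, le_refl _, by simp⟩
  | @cons u w v h q ih =>
    intro hp
    have hq : q.IsPath := hp.of_cons
    have hu : u ∉ q.support := ((SimpleGraph.Walk.cons_isPath_iff h q).mp hp).2
    obtain ⟨m, hmw, hmv, hrep⟩ := ih hq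
    rcases hstep h with hup | hdown
    · -- ℓ w = ℓ u + 1 : the path goes away from the root from now on
      have hm : m = ℓ w := by
        by_contra hne
        have hmlt : m < ℓ w := lt_of_le_of_ne hmw hne
        cases q with
        | nil =>
          have := congrArg List.length hrep
          simp at this
          omega
        | @cons w y v h' q' =>
          -- extract the second element of the level sequence
          have h2 : (List.range' m (ℓ w - m + 1)).reverse
              = ℓ w :: (ℓ w - 1) :: (List.range' m (ℓ w - m - 1)).reverse := by
            have e1 : List.range' m (ℓ w - m + 1)
                = List.range' m (ℓ w - m - 1) ++ List.range' (m + (ℓ w - m - 1)) 2 := by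
              rw [List.range'_append_1]
              congr 1
              omega
            have e2 : List.range' (m + (ℓ w - m - 1)) 2 = [ℓ w - 1, ℓ w] := by
              have e3 : m + (ℓ w - m - 1) = ℓ w - 1 := by omega
              rw [e3, List.range'_succ, List.range'_one]
              congr 2
              omega
            rw [e1, e2]
            simp
          rw [h2] at hrep
          rw [SimpleGraph.Walk.support_cons, q'.support_eq_cons] at hrep
          simp only [List.map_cons, List.cons_append, List.cons.injEq] at hrep
          have hy : ℓ y = ℓ w - 1 := hrep.2.1
          have hyu : y = u := hparent h' h.symm (by omega) (by omega)
          apply hu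
          rw [← hyu]
          simp [SimpleGraph.Walk.support_cons]
      subst hm
      refine ⟨ℓ u, le_refl _, by omega, ?_⟩
      have e1 : List.range' (ℓ w) (ℓ w - ℓ w + 1) = [ℓ w] := by
        rw [Nat.sub_self]
        rfl
      rw [e1] at hrep
      have e2 : List.range' (ℓ u + 1) (ℓ v - ℓ u)
          = ℓ w :: List.range' (ℓ w + 1) (ℓ v - ℓ w) := by
        have e3 : ℓ v - ℓ u = (ℓ v - ℓ w) + 1 := by omega
        rw [e3, List.range'_succ, hup]
      rw [SimpleGraph.Walk.support_cons, List.map_cons, hrep, Nat.sub_self, e2]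
      simp
    · -- ℓ u = ℓ w + 1 : going toward the root first
      refine ⟨m, by omega, hmv, ?_⟩
      have e1 : List.range' m (ℓ u - m + 1) = List.range' m (ℓ w - m + 1) ++ [ℓ u] := by
        have e2 : ℓ u - m + 1 = (ℓ w - m + 1) + 1 := by omega
        rw [e2, List.range'_1_concat]
        congr 2
        omega
      rw [SimpleGraph.Walk.support_cons, List.map_cons, hrep, e1]
      simp

lemma exists_isPath {V : Type*} {T : SimpleGraph V} (hT : T.IsTree) (u v : V) :
    ∃ p : T.Walk u v, p.IsPath := by
  haveI := Classical.decEq V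
  exact (hT.isConnected u v).elim fun w => ⟨w.bypass, w.bypass_isPath⟩

lemma isPath_length_eq_dist {V : Type*} {T : SimpleGraph V} (hT : T.IsTree) {u v : V}
    (p : T.Walk u v) (hp : p.IsPath) : p.length = T.dist u v := by
  haveI := Classical.decEq V
  obtain ⟨q, hq⟩ := hT.isConnected.exists_walk_length_eq_dist u v
  have h1 : T.dist u v ≤ q.bypass.length := SimpleGraph.dist_le _
  have h2 := SimpleGraph.Walk.length_bypass_le q
  have heq : p = q.bypass := (hT.existsUnique_path u v).unique hp q.bypass_isPath
  rw [heq]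
  omega

lemma tree_hstep {V : Type*} {T : SimpleGraph V} (hT : T.IsTree) (r : V) {u v : V}
    (h : T.Adj u v) : T.dist r v = T.dist r u + 1 ∨ T.dist r u = T.dist r v + 1 := by
  haveI := Classical.decEq V
  obtain ⟨P, hP⟩ := exists_isPath hT r u
  have hPlen : P.length = T.dist r u := isPath_length_eq_dist hT P hP
  by_cases hv : v ∈ P.support
  · right
    have t1 : (P.takeUntil v hv).IsPath := hP.takeUntil hv
    have t2 : (P.dropUntil v hv).IsPath := hP.dropUntil hv
    have l1 : (P.takeUntil v hv).length = T.dist r v := isPath_length_eq_dist hT _ t1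
    have l2 : (P.dropUntil v hv).length = T.dist v u := isPath_length_eq_dist hT _ t2
    have l3 : (P.takeUntil v hv).length + (P.dropUntil v hv).length = P.length := by
      have := congrArg SimpleGraph.Walk.length (P.take_spec hv)
      rwa [SimpleGraph.Walk.length_append] at this
    have l4 : T.dist v u = 1 := SimpleGraph.dist_eq_one_iff_adj.mpr h.symm
    omega
  · left
    have hQ : (SimpleGraph.Walk.cons h.symm P.reverse).IsPath := by
      rw [SimpleGraph.Walk.cons_isPath_iff]
      exact ⟨hP.reverse, by rwa [SimpleGraph.Walk.support_reverse, List.mem_reverse]⟩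
    have hl := isPath_length_eq_dist hT _ hQ
    simp only [SimpleGraph.Walk.length_cons, SimpleGraph.Walk.length_reverse] at hl
    have hc : T.dist r v = T.dist v r := SimpleGraph.dist_comm
    omega

lemma tree_hparent {V : Type*} {T : SimpleGraph V} (hT : T.IsTree) (r : V) {x y z : V}
    (hxy : T.Adj x y) (hxz : T.Adj x z)
    (hy : T.dist r y + 1 = T.dist r x) (hz : T.dist r z + 1 = T.dist r x) : y = z := by
  haveI := Classical.decEq V
  have key : ∀ {y : V}, T.Adj x y → T.dist r y + 1 = T.dist r x →
      ∃ Q : T.Walk x r, Q.IsPath ∧ Q.getVert 1 = y := by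
    intro y hxy hy
    obtain ⟨P, hP⟩ := exists_isPath hT r y
    have hPlen := isPath_length_eq_dist hT P hP
    have hx : x ∉ P.support := by
      intro hx
      have t1 : (P.takeUntil x hx).IsPath := hP.takeUntil hx
      have l1 := isPath_length_eq_dist hT _ t1
      have l2 := SimpleGraph.Walk.length_takeUntil_le P hx
      omega
    refine ⟨SimpleGraph.Walk.cons hxy P.reverse, ?_, ?_⟩
    · rw [SimpleGraph.Walk.cons_isPath_iff]
      exact ⟨hP.reverse, by rwa [SimpleGraph.Walk.support_reverse, List.mem_reverse]⟩
    · show (SimpleGraph.Walk.cons hxy P.reverse).getVert (0 + 1) = y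
      rw [SimpleGraph.Walk.getVert_cons_succ, SimpleGraph.Walk.getVert_zero]
  obtain ⟨Qy, hQy, hgy⟩ := key hxy hy
  obtain ⟨Qz, hQz, hgz⟩ := key hxz hz
  have heq : Qy = Qz := (hT.existsUnique_path x r).unique hQy hQz
  rw [← hgy, ← hgz, heq]

lemma listTree_adj (n : ℕ) (l : List ℕ) : listTree.Adj (n :: l) l := by
  rw [listTree, SimpleGraph.fromRel_adj]
  exact ⟨fun h => by simpa using congrArg List.length h, Or.inr ⟨n, rfl⟩⟩

lemma listTree_hstep {x y : List ℕ} (h : listTree.Adj x y) :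
    y.length = x.length + 1 ∨ x.length = y.length + 1 := by
  rw [listTree, SimpleGraph.fromRel_adj] at h
  rcases h.2 with ⟨n, rfl⟩ | ⟨n, rfl⟩
  · left; simp
  · right; simp

lemma listTree_hparent {x y z : List ℕ} (hxy : listTree.Adj x y) (hxz : listTree.Adj x z)
    (hy : y.length + 1 = x.length) (hz : z.length + 1 = x.length) : y = z := by
  rw [listTree, SimpleGraph.fromRel_adj] at hxy hxz
  rcases hxy.2 with ⟨n, rfl⟩ | ⟨n, hn⟩
  · simp at hy; omega
  rcases hxz.2 with ⟨n', rfl⟩ | ⟨n', hn'⟩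
  · simp at hz; omega
  rw [hn] at hn'
  injection hn'

def downWalk (x : List ℕ) : (k : ℕ) → listTree.Walk (List.replicate k 0 ++ x) x
  | 0 => SimpleGraph.Walk.nil.copy (by simp) rfl
  | k + 1 =>
      (SimpleGraph.Walk.cons (listTree_adj 0 (List.replicate k 0 ++ x)) (downWalk x k)).copy
        (by simp [List.replicate_succ]) rfl

lemma downWalk_support_map (x : List ℕ) (k : ℕ) :
    (downWalk x k).support.map List.length = (List.range' x.length (k + 1)).reverse := by
  induction k with
  | zero => simp [downWalk]
  | succ k ih =>
    rw [List.range'_1_concat]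
    simp only [downWalk, SimpleGraph.Walk.support_copy, SimpleGraph.Walk.support_cons,
      List.map_cons, ih, List.reverse_append]
    simp
    omega

lemma downWalk_mem (x : List ℕ) (k : ℕ) :
    ∀ y ∈ (downWalk x k).support, ∃ j, y = List.replicate j 0 ++ x := by
  induction k with
  | zero =>
    intro y hy
    simp [downWalk] at hy
    exact ⟨0, by simp [hy]⟩
  | succ k ih =>
    intro y hy
    simp only [downWalk, SimpleGraph.Walk.support_copy, SimpleGraph.Walk.support_cons,
      List.mem_cons] at hy
    rcases hy with rfl | hy
    · exact ⟨k + 1, by simp [List.replicate_succ]⟩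
    · exact ih y hy

lemma downWalk_isPath (x : List ℕ) (k : ℕ) : (downWalk x k).IsPath := by
  apply SimpleGraph.Walk.IsPath.mk'
  apply List.Nodup.of_map List.length
  rw [downWalk_support_map]
  exact List.nodup_reverse.mpr (List.nodup_range' 1 Nat.one_pos)

lemma infix_helper {α : Type*} {X X' Y Y' : List α} (h1 : X <:+ X') (h2 : Y <+: Y') :
    X ++ Y <:+: X' ++ Y' := by
  obtain ⟨t, rfl⟩ := h1
  obtain ⟨s, rfl⟩ := h2
  exact ⟨t, s, by simp⟩

/-- If every vertex at distance `i` from the root of a tree gets color `c i`,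
then (first part) every path induces a color sequence obtained by reading the
level coloring down from level `a` to a turning level `m` and back up to level
`b`; consequently (second part, stated for the complete infinite tree
`listTree`, where the level of a vertex is its list length), the tree coloring
avoids squares of period `≥ k` if and only if all palindromic extensions
`f ++ s ++ f.reverse` (with `f ++ s` a factor of the level word read toward
the root and `|s| = 1`) avoid squares of period `≥ k`. -/
theorem stmt_11 {α : Type*} (c : ℕ → α) :
    (∀ (V : Type) (T : SimpleGraph V), T.IsTree → ∀ (r u v : V)
        (p : T.Walk u v), p.IsPath →
      ∃ m, m ≤ T.dist r u ∧ m ≤ T.dist r v ∧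
        p.support.map (fun x => c (T.dist r x)) =
          ((List.range' m (T.dist r u - m + 1)).map c).reverse ++
            (List.range' (m + 1) (T.dist r v - m)).map c) ∧
    (∀ k : ℕ,
      (∀ (u v : List ℕ) (p : listTree.Walk u v), p.IsPath →
          ¬ HasSquareGE k (p.support.map (fun x => c x.length))) ↔
      (∀ a m : ℕ, m ≤ a →
          ¬ HasSquareGE k
            (((List.range' (m + 1) (a - m)).map c).reverse ++ [c m] ++
              (((List.range' (m + 1) (a - m)).map c).reverse).reverse))) := by
  constructor
  · intro V T hT r u v p hp
    obtain ⟨m, h1, h2, h3⟩ := levels_aux (G := T) (fun x => T.dist r x)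
      (fun h => tree_hstep hT r h) (fun hxy hxz hy hz => tree_hparent hT r hxy hxz hy hz) p hp
    refine ⟨m, h1, h2, ?_⟩
    have e : p.support.map (fun x => c (T.dist r x))
        = (p.support.map (fun x => T.dist r x)).map c := by
      rw [List.map_map]; rfl
    rw [e, h3, List.map_append, List.map_reverse]
  · intro k
    constructor
    · -- paths avoid squares → V-words avoid squares
      intro hpaths a m hma
      rcases eq_or_lt_of_le hma with rfl | hlt
      · have := hpaths (List.replicate m 0) (List.replicate m 0)
          SimpleGraph.Walk.nil SimpleGraph.Walk.IsPath.nil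
        simpa using this
      · -- build the V-shaped path
        set b := a - m - 1 with hb
        have hab : a - m = b + 1 := by omega
        set p₂ := (downWalk (1 :: List.replicate m 0) b).reverse with hp₂
        set p := (downWalk (List.replicate m 0) (a - m)).append
          (SimpleGraph.Walk.cons (listTree_adj 1 (List.replicate m 0)).symm p₂) with hpdef
        have hsup : p.support.map List.length
            = (List.range' m (a - m + 1)).reverse ++ List.range' (m + 1) (a - m) := by
          rw [hpdef, SimpleGraph.Walk.support_append, SimpleGraph.Walk.support_cons]
          rw [List.tail_cons, List.map_append, downWalk_support_map, hp₂,
            SimpleGraph.Walk.support_reverse, List.map_reverse, downWalk_support_map]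
          simp [hab]
        have hpath : p.IsPath := by
          apply SimpleGraph.Walk.IsPath.mk'
          rw [hpdef, SimpleGraph.Walk.support_append, SimpleGraph.Walk.support_cons,
            List.tail_cons]
          rw [List.nodup_append]
          refine ⟨(downWalk_isPath _ _).support_nodup, ?_, ?_⟩
          · rw [hp₂, SimpleGraph.Walk.support_reverse]
            exact List.nodup_reverse.mpr (downWalk_isPath _ _).support_nodup
          · intro y hy y' hy' hyy'
            subst hyy'
            obtain ⟨j, rfl⟩ := downWalk_mem _ _ y hy
            rw [hp₂, SimpleGraph.Walk.support_reverse, List.mem_reverse] at hy'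
            obtain ⟨j', he⟩ := downWalk_mem _ _ _ hy'
            have h1' : (1 : ℕ) ∈ List.replicate j 0 ++ List.replicate m 0 := by
              rw [he]
              simp
            simp [List.mem_replicate] at h1'
        have := hpaths _ _ p hpath
        have hw : p.support.map (fun x => c x.length)
            = ((List.range' (m + 1) (a - m)).map c).reverse ++ [c m] ++
              (((List.range' (m + 1) (a - m)).map c).reverse).reverse := by
          have e : p.support.map (fun x => c x.length)
              = (p.support.map List.length).map c := by
            rw [List.map_map]; rfl
          rw [e, hsup, List.map_append, List.map_reverse]
          have e2 : List.range' m (a - m + 1) = m :: List.range' (m + 1) (a - m) :=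
            by rw [List.range'_succ]
          rw [e2]
          simp
        rwa [hw] at this
    · -- V-words avoid squares → paths avoid squares
      intro hpal u v p hp hsq
      obtain ⟨m, h1, h2, h3⟩ := levels_aux (G := listTree) List.length
        (fun h => listTree_hstep h) (fun hxy hxz hy hz => listTree_hparent hxy hxz hy hz) p hp
      set a := max u.length v.length with ha
      refine hpal a m (le_trans h1 (le_max_left _ _)) ?_
      obtain ⟨w, hk, hinf⟩ := hsq
      have hw : p.support.map (fun x => c x.length)
          = ((List.range' m (u.length - m + 1)).map c).reverse ++
            (List.range' (m + 1) (v.length - m)).map c := by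
        have e : p.support.map (fun x => c x.length)
            = (p.support.map List.length).map c := by
          rw [List.map_map]; rfl
        rw [e, h3, List.map_append, List.map_reverse]
      rw [hw] at hinf
      refine ⟨w, hk, hinf.trans ?_⟩
      have etgt : ((List.range' (m + 1) (a - m)).map c).reverse ++ [c m] ++
            (((List.range' (m + 1) (a - m)).map c).reverse).reverse
          = ((List.range' m (a - m + 1)).map c).reverse ++
            (List.range' (m + 1) (a - m)).map c := by
        have e2 : List.range' m (a - m + 1) = m :: List.range' (m + 1) (a - m) :=
          by rw [List.range'_succ]
        rw [e2]
        simp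
      rw [etgt]
      apply infix_helper
      · rw [List.reverse_suffix]
        apply List.IsPrefix.map
        exact ⟨List.range' (m + (u.length - m + 1)) ((a - m + 1) - (u.length - m + 1)), by
          rw [List.range'_append_1]
          congr 1
          have : u.length ≤ a := le_max_left _ _
          omega⟩
      · apply List.IsPrefix.map
        exact ⟨List.range' (m + 1 + (v.length - m)) ((a - m) - (v.length - m)), by
          rw [List.range'_append_1]
          congr 1
          have : v.length ≤ a := le_max_right _ _
          omega⟩
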